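/- In W_q = Λ(y_1, …, y_q) ⊗ ℚ[c_1, …, c_q]_{2q} with q = 2k, the element y_2 ∧ c_2^k is a cocycle of degree 4k + 3 = 2q + 3, and it is not a coboundary. -/

import Mathlib

/-! A concrete model of the truncated Weil algebra
`W_q = Λ(y_1, …, y_q) ⊗ ℚ[c_1, …, c_q]_{2q}` (deg `y_i = 2i−1`, deg `c_i = 2i`,
polynomial part truncated in degrees `> 2q`): it has a ℚ-basis of monomials
`y_I c_J` indexed by `(I, J)` with `I ⊆ {1,…,q}` a subset and `J` a multi-exponent
with `deg c_J = 2·cdeg J ≤ 2q`.  The index `i : Fin q` stands for `i.val + 1`. -/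

/-- Index of a monomial `y_I ⊗ c_J`. -/
abbrev WIdx (q : ℕ) := Finset (Fin q) × (Fin q →₀ ℕ)

/-- Half the degree of `c_J = ∏ c_i^{J i}` : `cdeg J = Σ i·J_i` (so `deg c_J = 2 cdeg J`). -/
def cdeg {q : ℕ} (J : Fin q →₀ ℕ) : ℕ := J.sum fun i m => (i.val + 1) * m

/-- The underlying ℚ-vector space of `W_q`: free on the monomials `y_I c_J` with
`deg c_J ≤ 2q`. -/
abbrev Wq (q : ℕ) : Type := {p : WIdx q // cdeg p.2 ≤ q} →₀ ℚ

/-- Value of the differential on a basis monomial `y_I c_J`: by the graded Leibniz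
rule and `d y_i = c_i`, `d c_i = 0`, it is `Σ_{r ∈ I} ± y_{I∖{r}} c_J c_r`, where a
term is truncated to `0` when `deg (c_J c_r) > 2q`, and the sign is `(−1)` to the
number of `y`-generators preceding `y_r` in `y_I`. -/
noncomputable def dMon {q : ℕ} (p : {p : WIdx q // cdeg p.2 ≤ q}) : Wq q :=
  ∑ r ∈ p.1.1, if h : cdeg (p.1.2 + Finsupp.single r 1) ≤ q then
      ((-1 : ℚ) ^ ((p.1.1.filter (· < r)).card)) •
        Finsupp.single ⟨(p.1.1.erase r, p.1.2 + Finsupp.single r 1), h⟩ (1 : ℚ)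
    else 0

/-- The differential of `W_q`, extended ℚ-linearly from the monomial basis. -/
noncomputable def dW (q : ℕ) : Wq q →ₗ[ℚ] Wq q :=
  Finsupp.lsum ℚ fun p => LinearMap.toSpanSingleton ℚ (Wq q) (dMon p)

/-- Total degree of the monomial `y_I c_J`: `Σ_{i∈I} (2i−1) + 2 cdeg J`. -/
def tdeg {q : ℕ} (p : WIdx q) : ℕ :=
  (∑ i ∈ p.1, (2 * (i.val + 1) - 1)) + 2 * cdeg p.2

/-- In `W_q` with `q = 2k`, the monomial `y_2 ∧ c_2^k` (given by `I = {y_2}` and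
`J = ` the exponent of `c_2^k`, where `i2 : Fin q` with `i2.val = 1` indexes the
generators `y_2, c_2`) is a cocycle of degree `4k + 3 = 2q + 3` and is not a
coboundary. -/
theorem y2c2k_cocycle_not_coboundary (k : ℕ) (hk : 1 ≤ k) (q : ℕ) (hq : q = 2 * k)
    (i2 : Fin q) (hi2 : i2.val = 1)
    (e : {p : WIdx q // cdeg p.2 ≤ q}) (he : e.1 = ({i2}, Finsupp.single i2 k)) :
    tdeg e.1 = 2 * q + 3 ∧ dW q (Finsupp.single e 1) = 0 ∧
      ¬ ∃ w : Wq q, dW q w = Finsupp.single e 1 := by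
  have hcd : cdeg (Finsupp.single i2 k) = 2 * k := by
    simp [cdeg, Finsupp.sum_single_index, hi2]
  have hz : ∀ p, (dMon p) e = 0 := by
    intro p
    rw [dMon, Finsupp.finset_sum_apply]
    refine Finset.sum_eq_zero fun r hr => ?_
    split_ifs with h
    · rw [Finsupp.smul_apply, Finsupp.single_apply, if_neg, smul_zero]
      intro hpe
      have h1 : ((p.1.1.erase r, p.1.2 + Finsupp.single r 1) : WIdx q)
          = ({i2}, Finsupp.single i2 k) := by
        rw [← he]; exact congrArg Subtype.val hpe
      have hJ : p.1.2 + Finsupp.single r 1 = Finsupp.single i2 k :=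
        congrArg Prod.snd h1
      have hI : p.1.1.erase r = {i2} := congrArg Prod.fst h1
      have hr2 : r = i2 := by
        by_contra hne
        have h2 := DFunLike.congr_fun hJ r
        simp [Finsupp.single_apply, Ne.symm hne] at h2
      rw [hr2] at hI
      have h3 : (i2 : Fin q) ∈ ({i2} : Finset (Fin q)) := Finset.mem_singleton_self i2
      rw [← hI] at h3
      exact absurd h3 (Finset.notMem_erase i2 _)
    · rfl
  refine ⟨?_, ?_, ?_⟩
  · rw [he]
    simp only [tdeg, hcd]
    simp [hi2, hq]
    ring
  · rw [dW, Finsupp.lsum_single, LinearMap.toSpanSingleton_apply, one_smul]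
    rw [dMon]
    have h1 : e.1.1 = {i2} := by rw [he]
    have h2 : e.1.2 = Finsupp.single i2 k := by rw [he]
    rw [h1, h2, Finset.sum_singleton]
    rw [dif_neg]
    have hc2 : cdeg (Finsupp.single i2 k + Finsupp.single i2 1) = 2 * k + 2 := by
      rw [← Finsupp.single_add, cdeg, Finsupp.sum_single_index (by simp)]
      simp [hi2]
      ring
    rw [hc2, hq]
    omega
  · rintro ⟨w, hw⟩
    have h0 : (dW q w) e = 1 := by rw [hw]; simp
    rw [dW, Finsupp.lsum_apply, Finsupp.sum_apply] at h0
    simp only [LinearMap.toSpanSingleton_apply, Finsupp.smul_apply, hz, smul_zero,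
      Finsupp.sum, Finset.sum_const_zero] at h0
    exact one_ne_zero h0.symm
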